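/- Let C be a cochain complex of R-modules of the form ⋯ → P^{n-1} --(a₁,a₂)--> P^n ⊕ Q --[[b₁,b₂],[b₃,1]]--> P^{n+1} ⊕ Q --(c₁;c₂)--> P^{n+2} → ⋯. Then in the homotopy category of cochain complexes, C is isomorphic to the complex P' : ⋯ → P^{n-1} --a₁--> P^n --(b₁ - b₂∘b₃)--> P^{n+1} --c₁--> P^{n+2} → ⋯. -/
import Mathlib


/- STATEMENT 3: In the homotopy category, the cochain complex
   C : ⋯ → P1 --(a₁,a₂)--> P2 ⊕ Q --[[b₁,b₂],[b₃,1]]--> P3 ⊕ Q --(c₁;c₂)--> P4 → ⋯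
   is isomorphic to
   P' : ⋯ → P1 --a₁--> P2 --(b₁ - b₂b₃)--> P3 --c₁--> P4 → ⋯ .
   The two complexes agree in all degrees outside {n, n+1}; an isomorphism in
   the homotopy category is a homotopy equivalence, given by chain maps
   f : C → P', g : P' → C which are the identity outside the window, together
   with homotopies (supported in the window) witnessing g∘f ≃ id_C and
   f∘g ≃ id_{P'}. -/
theorem stmt3 (R : Type*) [Ring R]
    (P1 P2 P3 P4 Q : Type*)
    [AddCommGroup P1] [Module R P1] [AddCommGroup P2] [Module R P2]
    [AddCommGroup P3] [Module R P3] [AddCommGroup P4] [Module R P4]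
    [AddCommGroup Q] [Module R Q]
    (a₁ : P1 →ₗ[R] P2) (a₂ : P1 →ₗ[R] Q)
    (b₁ : P2 →ₗ[R] P3) (b₂ : P2 →ₗ[R] Q) (b₃ : Q →ₗ[R] P3)
    (c₁ : P3 →ₗ[R] P4) (c₂ : Q →ₗ[R] P4)
    (hdd₁ : ((LinearMap.coprod b₁ b₃).prod
        (LinearMap.coprod b₂ LinearMap.id)).comp (a₁.prod a₂) = 0)
    (hdd₂ : (LinearMap.coprod c₁ c₂).comp
        ((LinearMap.coprod b₁ b₃).prod (LinearMap.coprod b₂ LinearMap.id)) = 0) :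
    -- d_C^n and d_{P'}^n
    ∃ (f₂ : (P2 × Q) →ₗ[R] P2) (f₃ : (P3 × Q) →ₗ[R] P3)
      (g₂ : P2 →ₗ[R] P2 × Q) (g₃ : P3 →ₗ[R] P3 × Q)
      (hC : (P3 × Q) →ₗ[R] P2 × Q) (hP : P3 →ₗ[R] P2),
      -- f : C → P' is a chain map (identity outside degrees n, n+1)
      f₂.comp (a₁.prod a₂) = a₁ ∧
      f₃.comp ((LinearMap.coprod b₁ b₃).prod (LinearMap.coprod b₂ LinearMap.id))
        = (b₁ - b₃.comp b₂).comp f₂ ∧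
      c₁.comp f₃ = LinearMap.coprod c₁ c₂ ∧
      -- g : P' → C is a chain map (identity outside degrees n, n+1)
      g₂.comp a₁ = a₁.prod a₂ ∧
      g₃.comp (b₁ - b₃.comp b₂)
        = ((LinearMap.coprod b₁ b₃).prod (LinearMap.coprod b₂ LinearMap.id)).comp g₂ ∧
      (LinearMap.coprod c₁ c₂).comp g₃ = c₁ ∧
      -- hC is a homotopy id_C ≃ g ∘ f (supported in the window)
      LinearMap.id - g₂.comp f₂
        = hC.comp ((LinearMap.coprod b₁ b₃).prod (LinearMap.coprod b₂ LinearMap.id)) ∧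
      LinearMap.id - g₃.comp f₃
        = ((LinearMap.coprod b₁ b₃).prod (LinearMap.coprod b₂ LinearMap.id)).comp hC ∧
      -- hP is a homotopy id_{P'} ≃ f ∘ g (supported in the window)
      LinearMap.id - f₂.comp g₂ = hP.comp (b₁ - b₃.comp b₂) ∧
      LinearMap.id - f₃.comp g₃ = (b₁ - b₃.comp b₂).comp hP := by
  have h1 : ∀ p, b₂ (a₁ p) + a₂ p = 0 := fun p =>
    congrArg Prod.snd (LinearMap.congr_fun hdd₁ p)
  have h2 : ∀ q, c₁ (b₃ q) + c₂ q = 0 := fun q => by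
    simpa using LinearMap.congr_fun hdd₂ (0, q)
  refine ⟨LinearMap.fst R P2 Q,
    (LinearMap.id : P3 →ₗ[R] P3).coprod (-b₃),
    (LinearMap.id : P2 →ₗ[R] P2).prod (-b₂),
    (LinearMap.id : P3 →ₗ[R] P3).prod 0,
    (0 : (P3 × Q) →ₗ[R] P2).prod (LinearMap.snd R P3 Q),
    0, ?_, ?_, ?_, ?_, ?_, ?_, ?_, ?_, ?_, ?_⟩
  · ext x <;> simp
  · ext x <;> simp [sub_eq_add_neg]
  · ext x <;> simp [eq_neg_of_add_eq_zero_right (h2 _)]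
  · ext x <;> simp [eq_neg_of_add_eq_zero_right (h1 _)]
  · ext x <;> simp [sub_eq_add_neg]
  · ext x <;> simp
  · ext x <;> simp
  · ext x <;> simp [sub_eq_add_neg]
  · ext x <;> simp
  · ext x <;> simp
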